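/- (Hasse–Davenport consequence) Let q = p^s and let ψ be a nontrivial additive character of F_p, χ the quadratic character of F_p^×. Denote by Tr: F_{p^s} → F_p the trace and N: F_{p^s}^× → F_p^× the norm. If τ(ψ,χ) = ∑_{α∈F_p^×} χ(α)ψ(α) and p ≡ 1 mod 4 (so τ(ψ,χ) = ±√p), then ∑_{x ∈ F_{p^s}^×} χ(N(x)) ψ(Tr(x)) = −(−τ(ψ,χ))^s. Moreover the quadratic character of F_{p^s}^× coincides with χ ∘ N. -/

import Mathlib

/- Statement 17 (Hasse–Davenport consequence): with χ the quadratic character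
of 𝔽_p^×, ψ(a) = e^{2πi a/p}, τ(ψ,χ) = ∑_{α∈𝔽_p^×}χ(α)ψ(α), p ≡ 1 mod 4:
∑_{x∈𝔽_{p^s}^×} χ(N(x))ψ(Tr(x)) = −(−τ(ψ,χ))^s, and the quadratic character of
𝔽_{p^s}^× coincides with χ∘N. -/

set_option linter.unusedSectionVars false
set_option maxHeartbeats 1000000

noncomputable section
open scoped Classical

/-- The additive character `ψ(a) = e^{2πi a/p}` of `𝔽_p`. -/
def psiC (p : ℕ) (a : ZMod p) : ℂ :=
  Complex.exp (2 * Real.pi * Complex.I * (a.val : ℂ) / p)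

namespace HDaux

variable (p : ℕ) [hp : Fact p.Prime]

def zeta : ℂ := Complex.exp (2 * Real.pi * Complex.I / p)

lemma zeta_prim : IsPrimitiveRoot (zeta p) p :=
  Complex.isPrimitiveRoot_exp p hp.out.ne_zero

lemma zeta_pow : zeta p ^ p = 1 := (zeta_prim p).pow_eq_one

def Psi : AddChar (ZMod p) ℂ := AddChar.zmodChar p (zeta_pow p)

lemma Psi_apply (a : ZMod p) : Psi p a = psiC p a := by
  rw [Psi, AddChar.zmodChar_apply, psiC, zeta, ← Complex.exp_nat_mul]
  ring_nf

lemma Psi_primitive : (Psi p).IsPrimitive :=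
  AddChar.zmodChar_primitive_of_primitive_root p (zeta_prim p)

lemma Psi_ne_one : Psi p ≠ 1 := by
  rw [AddChar.ne_one_iff]
  refine ⟨1, ?_⟩
  rw [Psi, AddChar.zmodChar_apply]
  have h1 : ((1 : ZMod p)).val = 1 := by
    rw [ZMod.val_one_eq_one_mod, Nat.mod_eq_of_lt hp.out.one_lt]
  rw [h1, pow_one]
  exact (zeta_prim p).ne_one hp.out.one_lt

/-- sum of an additive character over a finset of summands -/
lemma addChar_sum {A M ι : Type*} [AddCommMonoid A] [CommMonoid M] (ψ : AddChar A M)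
    (s : Finset ι) (f : ι → A) : ψ (∑ i ∈ s, f i) = ∏ i ∈ s, ψ (f i) := by
  classical
  induction s using Finset.induction_on with
  | empty => simp
  | insert _ _ h ih => rw [Finset.sum_insert h, Finset.prod_insert h, AddChar.map_add_eq_mul, ih]

/-- sum over a finite field of `f` equals sum over units plus value at 0. -/
lemma sum_units {E M : Type*} [Field E] [Fintype E] [Fintype Eˣ] [AddCommMonoid M] (f : E → M)
    (h0 : f 0 = 0) : ∑ u : Eˣ, f u = ∑ x : E, f x := by
  classical
  rw [← Finset.sum_compl_add_sum ({0} : Finset E) f]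
  simp only [Finset.sum_singleton, h0, add_zero]
  refine Finset.sum_nbij' (i := fun (u : Eˣ) => (u : E))
    (j := fun x => if h : x = 0 then 1 else Units.mk0 x h) ?_ ?_ ?_ ?_ ?_
  · intro u _
    simp [Units.ne_zero]
  · intro x hx
    exact Finset.mem_univ _
  · intro u _
    simp [Units.ne_zero u]
  · intro x hx
    simp only [Finset.mem_compl, Finset.mem_singleton] at hx
    simp [hx]
  · intro u _
    rfl

end HDaux

namespace HDaux

/-- Sum of `ψ (y^2)` equals the Gauss sum of the quadratic character. -/
lemma sum_sq_eq_gaussSum {E : Type*} [Field E] [Fintype E] [DecidableEq E] (hE : ringChar E ≠ 2)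
    (ψ : AddChar E ℂ) (hψ : ψ ≠ 1) :
    ∑ y : E, ψ (y ^ 2) =
      gaussSum ((quadraticChar E).ringHomComp (Int.castRingHom ℂ)) ψ := by
  classical
  have key : ∀ x : E, ((Finset.univ.filter (fun y : E => y ^ 2 = x)).card : ℂ)
      = ((quadraticChar E x : ℤ) : ℂ) + 1 := by
    intro x
    have := quadraticChar_card_sqrts hE x
    rw [Set.toFinset_setOf] at this
    exact_mod_cast congrArg (fun z : ℤ => (z : ℂ)) this
  rw [Finset.sum_comp (fun x : E => ψ x) (fun y : E => y ^ 2)]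
  rw [Finset.sum_subset (Finset.subset_univ _)
    (fun x _ hx => by
      have : (Finset.univ.filter (fun y : E => y ^ 2 = x)).card = 0 := by
        rw [Finset.card_eq_zero, Finset.filter_eq_empty_iff]
        intro y _
        exact fun h => hx (Finset.mem_image.mpr ⟨y, Finset.mem_univ y, h⟩)
      rw [this, zero_smul])]
  have : ∀ x : E, (Finset.univ.filter (fun y : E => y ^ 2 = x)).card • ψ x
      = (((quadraticChar E x : ℤ) : ℂ) + 1) * ψ x := by
    intro x
    rw [nsmul_eq_mul, key]
  rw [Finset.sum_congr rfl (fun x _ => this x)]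
  simp only [add_mul, one_mul, Finset.sum_add_distrib]
  rw [AddChar.sum_eq_zero_of_ne_one hψ, add_zero, gaussSum]
  exact Finset.sum_congr rfl (fun x _ => by rw [MulChar.ringHomComp_apply]; norm_num

    )

/-- `∑_c ψ(a c²) = χ(a) τ` for `a ≠ 0`. -/
lemma sum_mul_sq {E : Type*} [Field E] [Fintype E] [DecidableEq E] (hE : ringChar E ≠ 2)
    (ψ : AddChar E ℂ) (hψ : ψ.IsPrimitive) {a : E} (ha : a ≠ 0) :
    ∑ c : E, ψ (a * c ^ 2) =
      ((quadraticChar E a : ℤ) : ℂ) *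
        gaussSum ((quadraticChar E).ringHomComp (Int.castRingHom ℂ)) ψ := by
  classical
  set χ := (quadraticChar E).ringHomComp (Int.castRingHom ℂ) with hχ
  have h1 : ∑ c : E, ψ (a * c ^ 2) = gaussSum χ (ψ.mulShift a) := by
    rw [← sum_sq_eq_gaussSum hE (ψ.mulShift a) (hψ ha)]
    exact Finset.sum_congr rfl fun c _ => by rw [AddChar.mulShift_apply]
  have hu := gaussSum_mulShift χ ψ (Units.mk0 a ha)
  have hval : χ a = ((quadraticChar E a : ℤ) : ℂ) := by rw [hχ, MulChar.ringHomComp_apply]; rfl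
  have hsq : χ a * χ a = 1 := by
    rw [hval, ← Int.cast_mul, ← sq, quadraticChar_sq_one ha, Int.cast_one]
  rw [h1, ← hu, Units.val_mk0, hval, ← mul_assoc, ← Int.cast_mul, ← sq,
    quadraticChar_sq_one ha, Int.cast_one, one_mul]

end HDaux

namespace HDaux

variable (p s : ℕ) [hp : Fact p.Prime] [Fintype (GaloisField p s)]

local notation "K" => GaloisField p s
local notation "F" => ZMod p

lemma cardK (hs : s ≠ 0) : Fintype.card K = p ^ s := by
  rw [← Nat.card_eq_fintype_card]
  exact GaloisField.card p s hs

/-- Frobenius as an algebra equivalence over `ZMod p`. -/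
def frobAlg : K ≃ₐ[F] K :=
  AlgEquiv.ofBijective
    ⟨frobenius K p, fun r => by
      show (algebraMap F K r) ^ p = algebraMap F K r
      rw [← map_pow, ZMod.pow_card]⟩
    ((Finite.injective_iff_bijective).mp (frobenius K p).injective)

lemma frobAlg_apply (x : K) : frobAlg p s x = x ^ p := rfl

lemma frobAlg_pow_apply (k : ℕ) (x : K) : (frobAlg p s ^ k) x = x ^ p ^ k := by
  induction k generalizing x with
  | zero => simp
  | succ n ih =>
      rw [pow_succ, AlgEquiv.mul_apply, frobAlg_apply, ih, ← pow_mul, ← pow_succ']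

lemma frobAlg_pow_s (hs : s ≠ 0) : frobAlg p s ^ s = 1 := by
  apply AlgEquiv.ext
  intro x
  rw [frobAlg_pow_apply, AlgEquiv.one_apply, ← cardK p s hs, FiniteField.pow_card]

lemma frobAlg_pow_ne_one (hs : s ≠ 0) {d : ℕ} (h0 : 0 < d) (hds : d < s) :
    frobAlg p s ^ d ≠ 1 := by
  intro h
  have hall : ∀ x : K, x ^ p ^ d = x := by
    intro x
    have := congrArg (fun σ : K ≃ₐ[F] K => σ x) h
    simpa [frobAlg_pow_apply] using this
  have h1d : 1 < p ^ d := Nat.one_lt_pow h0.ne' hp.out.one_lt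
  set f : Polynomial K := Polynomial.X ^ p ^ d - Polynomial.X with hf
  have hdeg : f.natDegree = p ^ d := FiniteField.X_pow_card_sub_X_natDegree_eq K h1d
  have hf0 : f ≠ 0 := fun hz => by simp [hz] at hdeg; omega
  have hsub : (Finset.univ : Finset K) ⊆ f.roots.toFinset := by
    intro x _
    rw [Multiset.mem_toFinset, Polynomial.mem_roots hf0]
    simp [hf, Polynomial.IsRoot, sub_eq_zero, hall x]
  have hcard := Finset.card_le_card hsub
  have h2 : f.roots.toFinset.card ≤ p ^ d :=
    le_trans (Multiset.toFinset_card_le _) (hdeg ▸ Polynomial.card_roots' f)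
  rw [Finset.card_univ, cardK p s hs] at hcard
  have : p ^ s ≤ p ^ d := le_trans hcard h2
  exact absurd this (not_le.mpr (Nat.pow_lt_pow_right hp.out.one_lt hds))

lemma orderOf_frobAlg (hs : s ≠ 0) : orderOf (frobAlg p s) = s := by
  have hdvd : orderOf (frobAlg p s) ∣ s := orderOf_dvd_of_pow_eq_one (frobAlg_pow_s p s hs)
  have hpos : 0 < orderOf (frobAlg p s) := orderOf_pos _
  rcases lt_or_eq_of_le (Nat.le_of_dvd (by omega) hdvd) with h | h
  · exact absurd (pow_orderOf_eq_one (frobAlg p s)) (frobAlg_pow_ne_one p s hs hpos h)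
  · exact h

lemma frobAlg_bij (hs : s ≠ 0) :
    Function.Bijective (fun k : Fin s => frobAlg p s ^ (k : ℕ)) := by
  rw [Fintype.bijective_iff_injective_and_card]
  constructor
  · intro k l hkl
    have := pow_injOn_Iio_orderOf (x := frobAlg p s)
      (by rw [orderOf_frobAlg p s hs]; exact k.2) (by rw [orderOf_frobAlg p s hs]; exact l.2) hkl
    exact Fin.ext this
  · rw [Fintype.card_fin, ← Nat.card_eq_fintype_card, IsGalois.card_aut_eq_finrank, GaloisField.finrank p hs]

lemma trace_eq (hs : s ≠ 0) (x : K) :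
    algebraMap F K (Algebra.trace F K x) = ∑ k : Fin s, (frobAlg p s ^ (k : ℕ)) x := by
  rw [trace_eq_sum_automorphisms]
  exact (Fintype.sum_bijective _ (frobAlg_bij p s hs) _ _ (fun k => rfl)).symm

lemma norm_eq (hs : s ≠ 0) (x : K) :
    algebraMap F K (Algebra.norm F x) = x ^ ∑ k ∈ Finset.range s, p ^ k := by
  rw [Algebra.norm_eq_prod_automorphisms]
  rw [← Finset.prod_pow_eq_pow_sum, ← Fin.prod_univ_eq_prod_range (fun k => x ^ p ^ k) s]
  refine (Fintype.prod_bijective _ (frobAlg_bij p s hs) _ _ (fun k => ?_)).symm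
  rw [frobAlg_pow_apply]

end HDaux

namespace HDaux

lemma geom_mul (p s : ℕ) (hp1 : 1 ≤ p) :
    (∑ k ∈ Finset.range s, p ^ k) * (p - 1) + 1 = p ^ s := by
  obtain ⟨q, rfl⟩ := Nat.exists_eq_add_of_le hp1
  induction s with
  | zero => simp
  | succ n ih =>
      rw [Finset.sum_range_succ, pow_succ]
      simp only [Nat.add_sub_cancel_left] at *
      calc (∑ k ∈ Finset.range n, (1 + q) ^ k + (1 + q) ^ n) * q + 1
          = ((∑ k ∈ Finset.range n, (1 + q) ^ k) * q + 1) + (1 + q) ^ n * q := by ring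
        _ = (1 + q) ^ n + (1 + q) ^ n * q := by rw [ih]
        _ = (1 + q) ^ n * (1 + q) := by ring

variable (p s : ℕ) [hp : Fact p.Prime] [Fintype (GaloisField p s)]

local notation "K" => GaloisField p s
local notation "F" => ZMod p

lemma norm_pow_iff (hs : s ≠ 0) (hp2 : p % 2 = 1) {x : K} (hx : x ≠ 0) :
    IsSquare x ↔ IsSquare (Algebra.norm F x) := by
  have hKp : ringChar K = p := ringChar.eq K p
  have hFp : ringChar F = p := ringChar.eq F p
  have hK2 : ringChar K ≠ 2 := by rw [hKp]; omega
  have hF2 : ringChar F ≠ 2 := by rw [hFp]; omega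
  have hNx : Algebra.norm F x ≠ 0 := Algebra.norm_ne_zero_iff.mpr hx
  rw [FiniteField.isSquare_iff hK2 hx, FiniteField.isSquare_iff hF2 hNx]
  set T := ∑ k ∈ Finset.range s, p ^ k with hT
  set m := p / 2 with hm
  have hTm : T * (p - 1) + 1 = p ^ s := geom_mul p s hp.out.one_le
  have hm2 : p - 1 = 2 * m := by omega
  have hcardK : Fintype.card K / 2 = T * m := by
    have h1 : Fintype.card K = 2 * (T * m) + 1 := by
      rw [cardK p s hs, ← hTm, hm2]; ring
    omega
  have hcardF : Fintype.card F / 2 = m := by rw [ZMod.card]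
  rw [hcardK, hcardF]
  have hinj := (algebraMap F K).injective
  constructor
  · intro h
    apply hinj
    rw [map_pow, map_one, norm_eq p s hs, ← hT, ← pow_mul]
    exact h
  · intro h
    have := congrArg (algebraMap F K) h
    rw [map_pow, map_one, norm_eq p s hs, ← hT, ← pow_mul] at this
    exact this

lemma part2 (hs : s ≠ 0) (hp2 : p % 2 = 1) (x : K) :
    quadraticChar K x = quadraticChar F (Algebra.norm F x) := by
  have hKp : ringChar K = p := ringChar.eq K p
  by_cases hx : x = 0
  · rw [hx, Algebra.norm_zero, quadraticChar_zero, quadraticChar_zero]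
  · have hNx : Algebra.norm F x ≠ 0 := Algebra.norm_ne_zero_iff.mpr hx
    by_cases hsq : IsSquare x
    · rw [(quadraticChar_one_iff_isSquare hx).mpr hsq,
        (quadraticChar_one_iff_isSquare hNx).mpr ((norm_pow_iff p s hs hp2 hx).mp hsq)]
    · rw [quadraticChar_neg_one_iff_not_isSquare.mpr hsq,
        quadraticChar_neg_one_iff_not_isSquare.mpr
          (fun h => hsq ((norm_pow_iff p s hs hp2 hx).mpr h))]

end HDaux

namespace HDaux
open Matrix

variable (p s : ℕ) [hp : Fact p.Prime] [Fintype (GaloisField p s)]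

local notation "K" => GaloisField p s
local notation "F" => ZMod p

lemma quadChar_disc {n : ℕ} (hn : s = n + 1) (hp4 : p % 4 = 1)
    (v : Module.Basis (Fin s) F K) (hv : LinearMap.IsOrthoᵢ (Algebra.traceForm F K) ⇑v) :
    quadraticChar F (∏ i : Fin s, Algebra.traceForm F K (v i) (v i)) = (-1) ^ n := by
  have hs : s ≠ 0 := by omega
  have hppos : 2 < p := by
    have := hp.out.two_le
    omega
  haveI : Fact (2 < p) := ⟨hppos⟩
  have hFp : ringChar F = p := ringChar.eq F p
  have hF2 : ringChar F ≠ 2 := by rw [hFp]; omega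
  set B := Algebra.traceForm F K with hB
  set a : Fin s → F := fun i => B (v i) (v i) with haf
  -- the diagonal entries are nonzero
  have ha : ∀ i, a i ≠ 0 := by
    intro i hai
    have hzero : B (v i) = 0 := by
      apply v.ext
      intro j
      by_cases hij : i = j
      · subst hij; simpa using hai
      · simpa using LinearMap.isOrthoᵢ_def.mp hv i j hij
    have := (traceForm_nondegenerate F K).1 (v i) (fun y => by rw [← hB, hzero]; rfl)
    exact Module.Basis.ne_zero v i this
  set d : F := ∏ i : Fin s, a i with hd
  have hd0 : d ≠ 0 := Finset.prod_ne_zero_iff.mpr (fun i _ => ha i)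
  -- the matrix of Frobenius conjugates
  set M : Matrix (Fin s) (Fin s) K :=
    Matrix.of (fun k i : Fin s => (frobAlg p s ^ (k : ℕ)) (v i)) with hM
  set δ : K := M.det with hδ
  have hδ2 : δ ^ 2 = algebraMap F K d := by
    have hmap : (algebraMap F K).mapMatrix (Matrix.diagonal a) = Mᵀ * M := by
      refine Matrix.ext fun i j => ?_
      rw [RingHom.mapMatrix_apply, Matrix.map_apply, Matrix.mul_apply]
      have hentry : (Matrix.diagonal a) i j = B (v i) (v j) := by
        by_cases hij : i = j
        · subst hij; simp [a]
        · rw [Matrix.diagonal_apply_ne _ hij]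
          exact (LinearMap.isOrthoᵢ_def.mp hv i j hij).symm
      rw [hentry, hB, Algebra.traceForm_apply, trace_eq p s hs]
      refine Finset.sum_congr rfl (fun k _ => ?_)
      rw [Matrix.transpose_apply, hM, Matrix.of_apply, Matrix.of_apply]
      exact _root_.map_mul _ _ _
    have := congrArg Matrix.det hmap
    rw [← RingHom.map_det, Matrix.det_mul, Matrix.det_transpose, Matrix.det_diagonal] at this
    rw [sq, hδ, ← this, hd]
  have hd0' : algebraMap F K d ≠ 0 := by
    simpa using (map_ne_zero (algebraMap F K)).mpr hd0
  have hδ0 : δ ≠ 0 := by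
    intro h
    rw [h, zero_pow (by norm_num)] at hδ2
    exact hd0' hδ2.symm
  -- Frobenius transforms δ by the sign of the cycle
  have hfrob : frobAlg p s δ = (-1 : K) ^ n * δ := by
    subst hn
    have hmapM : ((frobAlg p (n+1)).toAlgHom.toRingHom).mapMatrix M
        = M.submatrix (finRotate (n + 1)) id := by
      refine Matrix.ext fun k i => ?_
      rw [RingHom.mapMatrix_apply, Matrix.map_apply, Matrix.submatrix_apply, id_eq]
      show frobAlg p (n+1) ((frobAlg p (n+1) ^ (k : ℕ)) (v i)) = M (finRotate (n + 1) k) i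
      have h1 : frobAlg p (n+1) ((frobAlg p (n+1) ^ (k : ℕ)) (v i))
          = (frobAlg p (n+1) ^ ((k : ℕ) + 1)) (v i) := by
        rw [pow_succ', AlgEquiv.mul_apply]
      rw [h1, hM, Matrix.of_apply]
      congr 1
      have hval : ((finRotate (n + 1) k : Fin (n+1)) : ℕ) = ((k : ℕ) + 1) % (n + 1) := by
        rw [finRotate_succ_apply, Fin.val_add, Fin.val_one']
        rw [Nat.add_mod ((k : ℕ)) 1, Nat.mod_eq_of_lt k.isLt]
      rw [hval, ← pow_eq_pow_mod ((k : ℕ) + 1) (frobAlg_pow_s p (n+1) (by omega))]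
    have := congrArg Matrix.det hmapM
    rw [← RingHom.map_det, Matrix.det_permute, sign_finRotate] at this
    show (frobAlg p (n+1)).toAlgHom.toRingHom δ = _
    rw [hδ, this]
    congr 1
    push_cast
    rfl
  -- δ^(p-1) = (-1)^n
  have hpow : δ ^ (p - 1) = (-1 : K) ^ n := by
    have h1 : δ ^ p = (-1 : K) ^ n * δ := by
      rw [← frobAlg_apply p s δ, hfrob]
    have h2 : δ ^ (p - 1) * δ = (-1 : K) ^ n * δ := by
      rw [← pow_succ, Nat.sub_add_cancel hp.out.one_le, h1]
    exact mul_right_cancel₀ hδ0 h2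
  -- conclude via Euler's criterion
  have heuler := quadraticChar_eq_pow_of_char_ne_two' hF2 d
  have hcast : ((quadraticChar F d : ℤ) : F) = d ^ (p / 2) := by
    rw [heuler, ZMod.card]
  have hm2 : 2 * (p / 2) = p - 1 := by omega
  have hker : algebraMap F K ((quadraticChar F d : ℤ) : F)
      = algebraMap F K (((-1 : ℤ) ^ n : ℤ) : F) := by
    rw [hcast, map_pow, ← hδ2, ← pow_mul, mul_comm 2 (p/2), ← mul_comm 2 (p/2), hm2, hpow]
    push_cast
    ring
  have hF : ((quadraticChar F d : ℤ) : F) = (((-1 : ℤ) ^ n : ℤ) : F) :=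
    (algebraMap F K).injective hker
  have hne : ((1 : ℤ) : F) ≠ ((-1 : ℤ) : F) := by
    push_cast
    exact (CharP.neg_one_ne_one F p).symm
  rcases quadraticChar_dichotomy hd0 with h | h <;>
    rcases Nat.even_or_odd n with he | he
  · rw [h, he.neg_one_pow]
  · exfalso
    rw [h, he.neg_one_pow] at hF
    exact hne hF
  · exfalso
    rw [h, he.neg_one_pow] at hF
    exact hne hF.symm
  · rw [h, he.neg_one_pow]

end HDaux

namespace HDaux

variable (p s : ℕ) [hp : Fact p.Prime] [Fintype (GaloisField p s)]

local notation "K" => GaloisField p s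
local notation "F" => ZMod p

def PsiK : AddChar K ℂ :=
  (Psi p).compAddMonoidHom (Algebra.trace F K).toAddMonoidHom

lemma PsiK_apply (x : K) : PsiK p s x = Psi p (Algebra.trace F K x) := rfl

lemma PsiK_ne_one : PsiK p s ≠ 1 := by
  rw [AddChar.ne_one_iff]
  obtain ⟨a, ha⟩ := AddChar.ne_one_iff.mp (Psi_ne_one p)
  have hone : (1 : K) ≠ 0 := one_ne_zero
  have hnd := traceForm_nondegenerate F K
  have hex : ∃ b : K, Algebra.trace F K b ≠ 0 := by
    by_contra hcon
    push_neg at hcon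
    exact hone (hnd.1 1 (fun y => by
      rw [Algebra.traceForm_apply, one_mul]
      exact hcon y))
  obtain ⟨b, hb⟩ := hex
  refine ⟨(a * (Algebra.trace F K b)⁻¹) • b, ?_⟩
  rw [PsiK_apply, LinearMap.map_smul, smul_eq_mul, mul_assoc, inv_mul_cancel₀ hb, mul_one]
  exact ha

lemma gauss_eq_sum_units {E : Type*} [Field E] [Fintype E] [Fintype Eˣ] (ψ : AddChar E ℂ)
    (χ : MulChar E ℤ) (h0 : χ 0 = 0) :
    ∑ u : Eˣ, ((χ (u : E) : ℤ) : ℂ) * ψ (u : E)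
      = gaussSum (χ.ringHomComp (Int.castRingHom ℂ)) ψ := by
  rw [gaussSum]
  rw [sum_units (fun x : E => ((χ x : ℤ) : ℂ) * ψ x) (by simp [h0])]
  exact Finset.sum_congr rfl fun x _ => by rw [MulChar.ringHomComp_apply]; norm_num

theorem main (hp4 : p % 4 = 1) {n : ℕ} (hn : s = n + 1) :
    ∑ x : (GaloisField p s)ˣ,
        ((quadraticChar (ZMod p) (Algebra.norm (ZMod p) (x : GaloisField p s)) : ℤ) : ℂ) *
          psiC p (Algebra.trace (ZMod p) (GaloisField p s) (x : GaloisField p s)) =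
      -(-(∑ a : (ZMod p)ˣ,
            ((quadraticChar (ZMod p) (a : ZMod p) : ℤ) : ℂ) * psiC p (a : ZMod p))) ^ s := by
  have hs : s ≠ 0 := by omega
  have hp2 : p % 2 = 1 := by omega
  have hFp : ringChar F = p := ringChar.eq F p
  have hF2 : ringChar F ≠ 2 := by rw [hFp]; omega
  have hKp : ringChar K = p := ringChar.eq K p
  have hK2 : ringChar K ≠ 2 := by rw [hKp]; omega
  set τ : ℂ := gaussSum ((quadraticChar F).ringHomComp (Int.castRingHom ℂ)) (Psi p) with hτ
  -- rewrite the RHS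
  have hRHS : ∑ a : (ZMod p)ˣ, ((quadraticChar F (a : ZMod p) : ℤ) : ℂ) * psiC p (a : ZMod p)
      = τ := by
    rw [hτ, ← gauss_eq_sum_units (Psi p) (quadraticChar F) (quadraticChar_zero)]
    exact Finset.sum_congr rfl fun a _ => by rw [Psi_apply]
  rw [hRHS]
  -- rewrite the LHS into a Gauss sum over K
  have hLHS : ∑ x : Kˣ,
      ((quadraticChar F (Algebra.norm F (x : K)) : ℤ) : ℂ) * psiC p (Algebra.trace F K (x : K))
      = gaussSum ((quadraticChar K).ringHomComp (Int.castRingHom ℂ)) (PsiK p s) := by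
    rw [← gauss_eq_sum_units (PsiK p s) (quadraticChar K) (quadraticChar_zero)]
    refine Finset.sum_congr rfl fun x _ => ?_
    rw [part2 p s hs hp2 (x : K), PsiK_apply, Psi_apply]
  rw [hLHS]
  -- quadratic Gauss sum over K as a sum of ψ over squares
  rw [← sum_sq_eq_gaussSum hK2 (PsiK p s) (PsiK_ne_one p s)]
  -- choose an orthogonal basis for the trace form
  haveI : Invertible (2 : F) := invertibleOfNonzero (Ring.two_ne_zero hF2)
  obtain ⟨v0, hv0⟩ := LinearMap.BilinForm.exists_orthogonal_basis
    (B := Algebra.traceForm F K) (LinearMap.BilinForm.isSymm_iff.mp (Algebra.traceForm_isSymm F))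
  have hrank : Module.finrank F K = s := GaloisField.finrank p hs
  set v : Module.Basis (Fin s) F K := v0.reindex (finCongr hrank) with hvdef
  have hv : LinearMap.IsOrthoᵢ (Algebra.traceForm F K) ⇑v := by
    intro i j hij
    show Algebra.traceForm F K (v i) (v j) = 0
    rw [hvdef, Module.Basis.reindex_apply, Module.Basis.reindex_apply]
    exact LinearMap.isOrthoᵢ_def.mp hv0 _ _
      (fun h => hij (by simpa using congrArg (finCongr hrank) h))
  set a : Fin s → F := fun i => Algebra.traceForm F K (v i) (v i) with ha
  have hane : ∀ i, a i ≠ 0 := by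
    intro i hai
    have hzero : Algebra.traceForm F K (v i) = 0 := by
      apply v.ext
      intro j
      by_cases hij : i = j
      · subst hij; simpa [ha] using hai
      · simpa using LinearMap.isOrthoᵢ_def.mp hv i j hij
    have := (traceForm_nondegenerate F K).1 (v i) (fun y => by rw [hzero]; rfl)
    exact Module.Basis.ne_zero v i this
  -- expand the sum over K in coordinates
  have hTr : ∀ c : Fin s → F,
      Algebra.trace F K ((v.equivFun.symm c) ^ 2) = ∑ i : Fin s, a i * c i ^ 2 := by
    intro c
    have h1 : (v.equivFun.symm c) ^ 2 = (∑ i : Fin s, c i • v i) * (∑ j : Fin s, c j • v j) := by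
      rw [Module.Basis.equivFun_symm_apply, sq]
    rw [h1]
    have h2 : Algebra.trace F K ((∑ i : Fin s, c i • v i) * (∑ j : Fin s, c j • v j))
        = Algebra.traceForm F K (∑ i : Fin s, c i • v i) (∑ j : Fin s, c j • v j) := rfl
    rw [h2, LinearMap.BilinForm.sum_left]
    refine Finset.sum_congr rfl fun i _ => ?_
    rw [LinearMap.BilinForm.smul_left, LinearMap.BilinForm.sum_right]
    rw [Finset.sum_eq_single i
      (fun j _ hji => by
        rw [LinearMap.BilinForm.smul_right,
          LinearMap.isOrthoᵢ_def.mp hv i j (fun h => hji h.symm), mul_zero])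
      (fun h => absurd (Finset.mem_univ i) h)]
    rw [LinearMap.BilinForm.smul_right]
    have hai : ((Algebra.traceForm F K) (v i)) (v i) = a i := rfl
    rw [hai]
    ring
  have hsum : ∑ y : K, PsiK p s (y ^ 2)
      = ∑ c : Fin s → F, Psi p (∑ i : Fin s, a i * c i ^ 2) := by
    rw [← Equiv.sum_comp (v.equivFun.toEquiv.symm : (Fin s → F) ≃ K)
      (fun y => PsiK p s (y ^ 2))]
    refine Finset.sum_congr rfl fun c _ => ?_
    show PsiK p s ((v.equivFun.symm c) ^ 2) = _
    rw [PsiK_apply, hTr]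
  rw [hsum]
  -- factor the sum as a product of one-dimensional Gauss sums
  have hfactor : ∑ c : Fin s → F, Psi p (∑ i : Fin s, a i * c i ^ 2)
      = ∏ i : Fin s, ∑ t : F, Psi p (a i * t ^ 2) := by
    rw [Finset.prod_univ_sum (fun _ => Finset.univ) (fun i t => Psi p (a i * t ^ 2)),
      Fintype.piFinset_univ]
    exact Finset.sum_congr rfl fun c _ => addChar_sum _ _ _
  rw [hfactor]
  have hone : ∀ i : Fin s, ∑ t : F, Psi p (a i * t ^ 2)
      = ((quadraticChar F (a i) : ℤ) : ℂ) * τ := by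
    intro i
    exact sum_mul_sq hF2 (Psi p) (Psi_primitive p) (hane i)
  rw [Finset.prod_congr rfl (fun i _ => hone i), Finset.prod_mul_distrib,
    Finset.prod_const, Finset.card_univ, Fintype.card_fin]
  have hd : ∏ i : Fin s, ((quadraticChar F (a i) : ℤ) : ℂ)
      = ((quadraticChar F (∏ i : Fin s, a i) : ℤ) : ℂ) := by
    rw [map_prod]
    push_cast
    rfl
  rw [hd, quadChar_disc p s hn hp4 v hv]
  push_cast
  rw [hn, neg_pow τ, pow_succ]
  ring

end HDaux


theorem hasse_davenport_quadratic (p s : ℕ) [Fact p.Prime]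
    [Fintype (GaloisField p s)] (hp : p % 4 = 1) (hs : s ≠ 0) :
    (∑ x : (GaloisField p s)ˣ,
        ((quadraticChar (ZMod p) (Algebra.norm (ZMod p) (x : GaloisField p s)) : ℤ) : ℂ) *
          psiC p (Algebra.trace (ZMod p) (GaloisField p s) (x : GaloisField p s)) =
      -(-(∑ a : (ZMod p)ˣ,
            ((quadraticChar (ZMod p) (a : ZMod p) : ℤ) : ℂ) * psiC p (a : ZMod p))) ^ s) ∧
    (∀ x : GaloisField p s,
      (quadraticChar (GaloisField p s) x : ℤ) =
        (quadraticChar (ZMod p) (Algebra.norm (ZMod p) x) : ℤ)) := by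
  constructor
  · exact HDaux.main p s hp (n := s - 1) (by omega)
  · intro x
    exact_mod_cast HDaux.part2 p s hs (by omega) x
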